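/- Let f : ℝ → ℝ be smooth with f(0) = 0 and globally bounded derivative, with Lipschitz constant L = sup|f′|. Let u ∈ C²(ℝ²) satisfy ∂_t²u − ∂_x²u = f(u) + h on ℝ² with u(·,0) = a, ∂_t u(·,0) = b, where h is continuous. Then for every κ > 0 and 0 ≤ t ≤ T ≤ κ, sup_{K_t} |u| ≤ (sup_{|x|≤κ}|a| + T·sup_{|x|≤κ}|b| + T²·sup_{K_T}|h|)·e^{LTt}. -/

import Mathlib

open Real Set Filter MeasureTheory Topology

noncomputable section

/-- The wave operator `∂_t² - ∂_x²` on functions of `(x,t) ∈ ℝ²`. -/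
def waveOp (w : ℝ × ℝ → ℝ) (p : ℝ × ℝ) : ℝ :=
  iteratedDeriv 2 (fun s => w (p.1, s)) p.2 - iteratedDeriv 2 (fun y => w (y, p.2)) p.1

/-- The trapezoidal domain of dependence `K_T` over the base `[-κ,κ]`. -/
def KT (κ T : ℝ) : Set (ℝ × ℝ) :=
  {p : ℝ × ℝ | 0 ≤ p.2 ∧ p.2 ≤ T ∧ |p.1| ≤ κ - p.2}

def pdx (w : ℝ × ℝ → ℝ) (p : ℝ × ℝ) : ℝ := fderiv ℝ w p (1, 0)
def pdt (w : ℝ × ℝ → ℝ) (p : ℝ × ℝ) : ℝ := fderiv ℝ w p (0, 1)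

lemma hasDerivAt_slice_x (w : ℝ × ℝ → ℝ) (hw : Differentiable ℝ w) (x c : ℝ) :
    HasDerivAt (fun y => w (y, c)) (pdx w (x, c)) x := by
  have h1 : HasDerivAt (fun y : ℝ => (y, c)) ((1 : ℝ), (0 : ℝ)) x :=
    (hasDerivAt_id x).prodMk (hasDerivAt_const x c)
  exact ((hw (x, c)).hasFDerivAt.comp_hasDerivAt x h1)

lemma hasDerivAt_slice_t (w : ℝ × ℝ → ℝ) (hw : Differentiable ℝ w) (x c : ℝ) :
    HasDerivAt (fun s => w (x, s)) (pdt w (x, c)) c := by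
  have h1 : HasDerivAt (fun s : ℝ => (x, s)) ((0 : ℝ), (1 : ℝ)) c :=
    (hasDerivAt_const c x).prodMk (hasDerivAt_id c)
  exact ((hw (x, c)).hasFDerivAt.comp_hasDerivAt c h1)

lemma contDiff_pdx (w : ℝ × ℝ → ℝ) {n : ℕ} (hw : ContDiff ℝ (n + 1 : ℕ) w) :
    ContDiff ℝ n (pdx w) :=
  (hw.fderiv_right (m := n) (by exact_mod_cast le_refl _)).clm_apply
      (contDiff_const (c := ((1 : ℝ), (0 : ℝ))))

lemma contDiff_pdt (w : ℝ × ℝ → ℝ) {n : ℕ} (hw : ContDiff ℝ (n + 1 : ℕ) w) :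
    ContDiff ℝ n (pdt w) :=
  (hw.fderiv_right (m := n) (by exact_mod_cast le_refl _)).clm_apply
      (contDiff_const (c := ((0 : ℝ), (1 : ℝ))))

lemma waveOp_eq (u : ℝ × ℝ → ℝ) (hu : ContDiff ℝ 2 u) (p : ℝ × ℝ) :
    waveOp u p = pdt (pdt u) p - pdx (pdx u) p := by
  have h2 : ((2 : ℕ) : ℕ∞) = ((1 : ℕ) + 1 : ℕ) := by norm_num
  have hu' : ContDiff ℝ ((1 : ℕ) + 1 : ℕ) u := by exact_mod_cast hu
  have hdu : Differentiable ℝ u := hu.differentiable (by norm_num)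
  have hdt : Differentiable ℝ (pdt u) := (contDiff_pdt u hu').differentiable (by norm_num)
  have hdx : Differentiable ℝ (pdx u) := (contDiff_pdx u hu').differentiable (by norm_num)
  obtain ⟨x, t⟩ := p
  have e1 : deriv (fun s => u (x, s)) = fun s => pdt u (x, s) := by
    funext s; exact (hasDerivAt_slice_t u hdu x s).deriv
  have e2 : deriv (fun y => u (y, t)) = fun y => pdx u (y, t) := by
    funext y; exact (hasDerivAt_slice_x u hdu y t).deriv
  have i1 : iteratedDeriv 2 (fun s => u (x, s)) t = pdt (pdt u) (x, t) := by
    rw [show (2 : ℕ) = 1 + 1 from rfl, iteratedDeriv_succ, iteratedDeriv_one, e1]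
    exact (hasDerivAt_slice_t (pdt u) hdt x t).deriv
  have i2 : iteratedDeriv 2 (fun y => u (y, t)) x = pdx (pdx u) (x, t) := by
    rw [show (2 : ℕ) = 1 + 1 from rfl, iteratedDeriv_succ, iteratedDeriv_one, e2]
    exact (hasDerivAt_slice_x (pdx u) hdx x t).deriv
  simp [waveOp, i1, i2]

/-- derivative along the leftward characteristic through (x+t,0):  s ↦ u (x+t-s, s) -/
lemma hasDerivAt_charL (u : ℝ × ℝ → ℝ) (hu : Differentiable ℝ u) (x t s : ℝ) :
    HasDerivAt (fun s => u (x + t - s, s))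
      (pdt u (x + t - s, s) - pdx u (x + t - s, s)) s := by
  have h1 : HasDerivAt (fun s : ℝ => (x + t - s, s)) ((-1 : ℝ), (1 : ℝ)) s := by
    have := ((hasDerivAt_id s).const_sub (x + t)).prodMk (hasDerivAt_id s)
    simpa using this
  have h2 : HasDerivAt (fun s => u (x + t - s, s))
      ((fderiv ℝ u (x + t - s, s)) ((-1 : ℝ), (1 : ℝ))) s :=
    by exact (HasFDerivAt.comp_hasDerivAt
      (f := fun s : ℝ => (x + t - s, s)) s (hu (x + t - s, s)).hasFDerivAt h1)
  have e : (fderiv ℝ u (x + t - s, s)) ((-1 : ℝ), (1 : ℝ))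
      = pdt u (x + t - s, s) - pdx u (x + t - s, s) := by
    have : ((-1 : ℝ), (1 : ℝ)) = ((0 : ℝ), (1 : ℝ)) - ((1 : ℝ), (0 : ℝ)) := by norm_num
    rw [this, map_sub]; rfl
  exact e ▸ h2

/-- derivative along the rightward characteristic through (x-t,0):  s ↦ u (x-t+s, s) -/
lemma hasDerivAt_charR (u : ℝ × ℝ → ℝ) (hu : Differentiable ℝ u) (x t s : ℝ) :
    HasDerivAt (fun s => u (x - t + s, s))
      (pdt u (x - t + s, s) + pdx u (x - t + s, s)) s := by
  have h1 : HasDerivAt (fun s : ℝ => (x - t + s, s)) ((1 : ℝ), (1 : ℝ)) s := by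
    have := ((hasDerivAt_id s).const_add (x - t)).prodMk (hasDerivAt_id s)
    simpa using this
  have h2 : HasDerivAt (fun s => u (x - t + s, s))
      ((fderiv ℝ u (x - t + s, s)) ((1 : ℝ), (1 : ℝ))) s :=
    by exact (HasFDerivAt.comp_hasDerivAt
      (f := fun s : ℝ => (x - t + s, s)) s (hu (x - t + s, s)).hasFDerivAt h1)
  have e : (fderiv ℝ u (x - t + s, s)) ((1 : ℝ), (1 : ℝ))
      = pdt u (x - t + s, s) + pdx u (x - t + s, s) := by
    have : ((1 : ℝ), (1 : ℝ)) = ((0 : ℝ), (1 : ℝ)) + ((1 : ℝ), (0 : ℝ)) := by norm_num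
    rw [this, map_add]; rfl
  exact e ▸ h2

lemma cont_pdt (w : ℝ × ℝ → ℝ) (hw : ContDiff ℝ ((1:ℕ) : ℕ∞) w) : Continuous (pdt w) :=
  (contDiff_pdt w (n := 0) (by exact_mod_cast hw)).continuous

lemma cont_pdx (w : ℝ × ℝ → ℝ) (hw : ContDiff ℝ ((1:ℕ) : ℕ∞) w) : Continuous (pdx w) :=
  (contDiff_pdx w (n := 0) (by exact_mod_cast hw)).continuous

section FTC
variable (u : ℝ × ℝ → ℝ) (hu : ContDiff ℝ 2 u)
include hu

lemma contDiff1_ut : ContDiff ℝ ((1:ℕ) : ℕ∞) (pdt u) := by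
  exact_mod_cast contDiff_pdt u (n := 1) (by exact_mod_cast hu)

lemma contDiff1_ux : ContDiff ℝ ((1:ℕ) : ℕ∞) (pdx u) := by
  exact_mod_cast contDiff_pdx u (n := 1) (by exact_mod_cast hu)

lemma cont_utt : Continuous (pdt (pdt u)) := cont_pdt _ (contDiff1_ut u hu)
lemma cont_uxx : Continuous (pdx (pdx u)) := cont_pdx _ (contDiff1_ux u hu)
lemma cont_ut : Continuous (pdt u) := cont_pdt u (hu.of_le (by norm_num))
lemma cont_ux : Continuous (pdx u) := cont_pdx u (hu.of_le (by norm_num))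

/-- FTC in the vertical direction for `u_t`. -/
lemma ftc_vert (y τ : ℝ) :
    ∫ s in (0:ℝ)..τ, pdt (pdt u) (y, s) = pdt u (y, τ) - pdt u (y, 0) := by
  refine intervalIntegral.integral_eq_sub_of_hasDerivAt
    (f := fun s => pdt u (y, s)) (f' := fun s => pdt (pdt u) (y, s)) (fun s _ => ?_) ?_
  · exact hasDerivAt_slice_t (pdt u) ((contDiff1_ut u hu).differentiable (by norm_num)) y s
  · exact ((cont_utt u hu).comp (by continuity : Continuous fun s : ℝ => ((y, s) : ℝ × ℝ))).intervalIntegrable _ _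

/-- FTC in the horizontal direction for `u_x`. -/
lemma ftc_horiz (s α β : ℝ) :
    ∫ y in α..β, pdx (pdx u) (y, s) = pdx u (β, s) - pdx u (α, s) := by
  refine intervalIntegral.integral_eq_sub_of_hasDerivAt
    (f := fun y => pdx u (y, s)) (f' := fun y => pdx (pdx u) (y, s)) (fun y _ => ?_) ?_
  · exact hasDerivAt_slice_x (pdx u) ((contDiff1_ux u hu).differentiable (by norm_num)) y s
  · exact ((cont_uxx u hu).comp (by continuity : Continuous fun y : ℝ => ((y, s) : ℝ × ℝ))).intervalIntegrable _ _

/-- FTC along the leftward characteristic. -/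
lemma ftc_charL (x t : ℝ) :
    ∫ s in (0:ℝ)..t, (pdt u (x + t - s, s) - pdx u (x + t - s, s))
      = u (x, t) - u (x + t, 0) := by
  have h := intervalIntegral.integral_eq_sub_of_hasDerivAt
      (f := fun s => u (x + t - s, s))
      (f' := fun s => pdt u (x + t - s, s) - pdx u (x + t - s, s)) (a := 0) (b := t)
      (fun s _ => hasDerivAt_charL u (hu.differentiable (by norm_num)) x t s) ?_
  · simpa using h
  · apply Continuous.intervalIntegrable
    have hc : Continuous fun s : ℝ => ((x + t - s, s) : ℝ × ℝ) := by continuity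
    exact ((cont_ut u hu).comp hc).sub ((cont_ux u hu).comp hc)

/-- FTC along the rightward characteristic. -/
lemma ftc_charR (x t : ℝ) :
    ∫ s in (0:ℝ)..t, (pdt u (x - t + s, s) + pdx u (x - t + s, s))
      = u (x, t) - u (x - t, 0) := by
  have h := intervalIntegral.integral_eq_sub_of_hasDerivAt
      (f := fun s => u (x - t + s, s))
      (f' := fun s => pdt u (x - t + s, s) + pdx u (x - t + s, s)) (a := 0) (b := t)
      (fun s _ => hasDerivAt_charR u (hu.differentiable (by norm_num)) x t s) ?_
  · simpa using h
  · apply Continuous.intervalIntegrable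
    have hc : Continuous fun s : ℝ => ((x - t + s, s) : ℝ × ℝ) := by continuity
    exact ((cont_ut u hu).comp hc).add ((cont_ux u hu).comp hc)

end FTC

lemma ii_ind (φ : ℝ → ℝ) (hφ : Continuous φ) (S : Set ℝ) (hS : MeasurableSet S) (c d : ℝ) :
    IntervalIntegrable (S.indicator φ) volume c d := by
  rw [intervalIntegrable_iff]
  exact (hφ.integrableOn_uIcc.mono_set Ioc_subset_Icc_self).indicator hS

lemma setInt_zero {s : Set ℝ} (f : ℝ → ℝ) (h : volume s = 0) : (∫ y in s, f y) = 0 := by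
  rw [MeasureTheory.Measure.restrict_eq_zero.2 h]
  exact MeasureTheory.integral_zero_measure _

lemma trapezoid_swap (g : ℝ × ℝ → ℝ) (hg : Continuous g) (x t : ℝ) (ht : 0 ≤ t) :
    (∫ s in (0:ℝ)..t, ∫ y in (x - (t - s))..(x + (t - s)), g (y, s))
      = ∫ y in (x - t)..(x + t), ∫ s in (0:ℝ)..(t - |y - x|), g (y, s) := by
  set H : ℝ → ℝ → ℝ :=
    fun s y => Set.indicator (Set.Icc (x - (t - s)) (x + (t - s))) (fun y => g (y, s)) y with hH
  have hmt : x - t ≤ x + t := by linarith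
  -- Step A
  have stepA : ∀ s ∈ Set.Icc (0:ℝ) t,
      (∫ y in (x - t)..(x + t), H s y) = ∫ y in (x - (t - s))..(x + (t - s)), g (y, s) := by
    rintro s ⟨hs0, hst⟩
    have h1 : x - t ≤ x - (t - s) := by linarith
    have h2 : x - (t - s) ≤ x + (t - s) := by linarith
    have h3 : x + (t - s) ≤ x + t := by linarith
    have iL : IntervalIntegrable (H s) volume (x - t) (x - (t - s)) :=
      ii_ind _ (by fun_prop) _ measurableSet_Icc _ _
    have iM : IntervalIntegrable (H s) volume (x - (t - s)) (x + (t - s)) :=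
      ii_ind _ (by fun_prop) _ measurableSet_Icc _ _
    have iR : IntervalIntegrable (H s) volume (x + (t - s)) (x + t) :=
      ii_ind _ (by fun_prop) _ measurableSet_Icc _ _
    have eL : (∫ y in (x - t)..(x - (t - s)), H s y) = 0 := by
      rw [intervalIntegral.integral_of_le h1, hH,
        MeasureTheory.setIntegral_indicator measurableSet_Icc]
      apply setInt_zero
      refine measure_mono_null (t := {x - (t - s)}) ?_ (measure_singleton _)
      intro y hy
      simp only [Set.mem_inter_iff, Set.mem_Ioc, Set.mem_Icc] at hy
      simp [le_antisymm hy.1.2 hy.2.1]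
    have eR : (∫ y in (x + (t - s))..(x + t), H s y) = 0 := by
      rw [intervalIntegral.integral_of_le h3, hH,
        MeasureTheory.setIntegral_indicator measurableSet_Icc]
      apply setInt_zero
      refine measure_mono_null (t := (∅ : Set ℝ)) ?_ (by simp)
      intro y hy
      simp only [Set.mem_inter_iff, Set.mem_Ioc, Set.mem_Icc] at hy
      exact absurd hy.2.2 (by push_neg; linarith [hy.1.1])
    have eM : (∫ y in (x - (t - s))..(x + (t - s)), H s y)
        = ∫ y in (x - (t - s))..(x + (t - s)), g (y, s) := by
      apply intervalIntegral.integral_congr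
      intro y hy
      rw [Set.uIcc_of_le h2] at hy
      exact Set.indicator_of_mem hy _
    rw [← intervalIntegral.integral_add_adjacent_intervals iL (iM.trans iR),
        ← intervalIntegral.integral_add_adjacent_intervals iM iR, eL, eR, eM]
    simp
  -- Step B
  have stepB : ∀ y ∈ Set.Icc (x - t) (x + t),
      (∫ s in (0:ℝ)..t, H s y) = ∫ s in (0:ℝ)..(t - |y - x|), g (y, s) := by
    rintro y ⟨hy1, hy2⟩
    have habs : |y - x| ≤ t := by rw [abs_le]; constructor <;> linarith
    have hτ0 : 0 ≤ t - |y - x| := by linarith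
    have hτt : t - |y - x| ≤ t := by
      have := abs_nonneg (y - x); linarith
    have key : ∀ s : ℝ, y ∈ Set.Icc (x - (t - s)) (x + (t - s)) ↔ s ≤ t - |y - x| := by
      intro s
      rw [Set.mem_Icc]
      constructor
      · rintro ⟨h1', h2'⟩
        have : |y - x| ≤ t - s := abs_le.2 ⟨by linarith, by linarith⟩
        linarith
      · intro hs
        have : |y - x| ≤ t - s := by linarith
        rcases abs_le.1 this with ⟨h1', h2'⟩
        exact ⟨by linarith, by linarith⟩
    have hfun : (fun s => H s y) = Set.indicator (Set.Iic (t - |y - x|)) (fun s => g (y, s)) := by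
      funext s
      by_cases hc : s ≤ t - |y - x|
      · rw [hH]
        simp only []
        rw [Set.indicator_of_mem ((key s).2 hc), Set.indicator_of_mem (Set.mem_Iic.2 hc)]
      · rw [hH]
        simp only []
        rw [Set.indicator_of_notMem (fun hmem => hc ((key s).1 hmem)),
          Set.indicator_of_notMem (fun hmem => hc (Set.mem_Iic.1 hmem))]
    rw [hfun]
    have i1 : IntervalIntegrable (Set.indicator (Set.Iic (t - |y - x|)) (fun s => g (y, s)))
        volume 0 (t - |y - x|) := ii_ind _ (by fun_prop) _ measurableSet_Iic _ _
    have i2 : IntervalIntegrable (Set.indicator (Set.Iic (t - |y - x|)) (fun s => g (y, s)))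
        volume (t - |y - x|) t := ii_ind _ (by fun_prop) _ measurableSet_Iic _ _
    have e1 : (∫ s in (0:ℝ)..(t - |y - x|),
        Set.indicator (Set.Iic (t - |y - x|)) (fun s => g (y, s)) s)
        = ∫ s in (0:ℝ)..(t - |y - x|), g (y, s) := by
      apply intervalIntegral.integral_congr
      intro s hs
      rw [Set.uIcc_of_le hτ0] at hs
      exact Set.indicator_of_mem (Set.mem_Iic.2 hs.2) _
    have e2 : (∫ s in (t - |y - x|)..t,
        Set.indicator (Set.Iic (t - |y - x|)) (fun s => g (y, s)) s) = 0 := by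
      rw [intervalIntegral.integral_of_le hτt,
        MeasureTheory.setIntegral_indicator measurableSet_Iic]
      apply setInt_zero
      refine measure_mono_null (t := (∅ : Set ℝ)) ?_ (by simp)
      intro s hs
      simp only [Set.mem_inter_iff, Set.mem_Ioc, Set.mem_Iic] at hs
      exact absurd hs.2 (by push_neg; exact hs.1.1)
    rw [← intervalIntegral.integral_add_adjacent_intervals i1 i2, e1, e2, add_zero]
  -- Step C : Fubini
  have hL : (∫ s in (0:ℝ)..t, ∫ y in (x - (t - s))..(x + (t - s)), g (y, s))
      = ∫ s in Set.Ioc (0:ℝ) t, ∫ y in Set.Ioc (x - t) (x + t), H s y := by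
    rw [intervalIntegral.integral_of_le ht]
    apply MeasureTheory.setIntegral_congr_fun measurableSet_Ioc
    intro s hs
    dsimp only
    rw [← intervalIntegral.integral_of_le hmt]
    exact (stepA s ⟨le_of_lt hs.1, hs.2⟩).symm
  have hR : (∫ y in (x - t)..(x + t), ∫ s in (0:ℝ)..(t - |y - x|), g (y, s))
      = ∫ y in Set.Ioc (x - t) (x + t), ∫ s in Set.Ioc (0:ℝ) t, H s y := by
    rw [intervalIntegral.integral_of_le hmt]
    apply MeasureTheory.setIntegral_congr_fun measurableSet_Ioc
    intro y hy
    dsimp only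
    rw [← intervalIntegral.integral_of_le ht]
    exact (stepB y ⟨le_of_lt hy.1, hy.2⟩).symm
  rw [hL, hR]
  have hint : Integrable (Function.uncurry H)
      ((volume.restrict (Set.Ioc (0:ℝ) t)).prod (volume.restrict (Set.Ioc (x - t) (x + t)))) := by
    rw [MeasureTheory.Measure.prod_restrict]
    have hm1 : MeasurableSet {p : ℝ × ℝ | x - (t - p.1) ≤ p.2} :=
      measurableSet_le (by fun_prop : Continuous fun p : ℝ × ℝ => x - (t - p.1)).measurable
        continuous_snd.measurable
    have hm2 : MeasurableSet {p : ℝ × ℝ | p.2 ≤ x + (t - p.1)} :=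
      measurableSet_le continuous_snd.measurable
        (by fun_prop : Continuous fun p : ℝ × ℝ => x + (t - p.1)).measurable
    have hset : MeasurableSet {p : ℝ × ℝ | x - (t - p.1) ≤ p.2 ∧ p.2 ≤ x + (t - p.1)} :=
      hm1.inter hm2
    have hfun : Function.uncurry H
        = Set.indicator {p : ℝ × ℝ | x - (t - p.1) ≤ p.2 ∧ p.2 ≤ x + (t - p.1)}
          (fun p => g (p.2, p.1)) := by
      funext p
      obtain ⟨s, y⟩ := p
      simp only [Function.uncurry, hH, Set.indicator_apply, Set.mem_Icc, Set.mem_setOf_eq]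
    rw [hfun]
    apply MeasureTheory.IntegrableOn.indicator _ hset
    apply MeasureTheory.IntegrableOn.mono_set
      (t := Set.Icc (0:ℝ) t ×ˢ Set.Icc (x - t) (x + t))
    · exact (hg.comp (continuous_snd.prodMk continuous_fst)).continuousOn.integrableOn_compact
        (isCompact_Icc.prod isCompact_Icc)
    · exact Set.prod_mono Set.Ioc_subset_Icc_self Set.Ioc_subset_Icc_self
  exact MeasureTheory.integral_integral_swap hint

/-- d'Alembert representation formula for classical solutions. -/
lemma dAlembert (u : ℝ × ℝ → ℝ) (hu : ContDiff ℝ 2 u) (x t : ℝ) (ht : 0 ≤ t) :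
    2 * u (x, t) = u (x + t, 0) + u (x - t, 0) + (∫ y in (x - t)..(x + t), pdt u (y, 0))
      + ∫ s in (0:ℝ)..t, ∫ y in (x - (t - s))..(x + (t - s)), waveOp u (y, s) := by
  have hutt : Continuous (pdt (pdt u)) := cont_utt u hu
  have huxx : Continuous (pdx (pdx u)) := cont_uxx u hu
  have hut : Continuous (pdt u) := cont_ut u hu
  have hux : Continuous (pdx u) := cont_ux u hu
  have hG : Continuous (fun p : ℝ × ℝ => pdt (pdt u) p - pdx (pdx u) p) := hutt.sub huxx
  -- rewrite waveOp as utt - uxx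
  have e0 : (∫ s in (0:ℝ)..t, ∫ y in (x - (t - s))..(x + (t - s)), waveOp u (y, s))
      = ∫ s in (0:ℝ)..t, ∫ y in (x - (t - s))..(x + (t - s)),
          (pdt (pdt u) (y, s) - pdx (pdx u) (y, s)) := by
    simp only [waveOp_eq u hu]
  rw [e0]
  -- swap the order of integration
  rw [trapezoid_swap _ hG x t ht]
  -- inner FTC for the utt part
  have e1 : ∀ y ∈ Set.uIcc (x - t) (x + t),
      (∫ s in (0:ℝ)..(t - |y - x|), (pdt (pdt u) (y, s) - pdx (pdx u) (y, s)))
        = pdt u (y, t - |y - x|) - pdt u (y, 0)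
          - ∫ s in (0:ℝ)..(t - |y - x|), pdx (pdx u) (y, s) := by
    intro y _
    have i1 : IntervalIntegrable (fun s => pdt (pdt u) (y, s)) volume 0 (t - |y - x|) := by
      exact (hutt.comp (by fun_prop : Continuous fun s : ℝ => ((y, s) : ℝ × ℝ))).intervalIntegrable _ _
    have i2 : IntervalIntegrable (fun s => pdx (pdx u) (y, s)) volume 0 (t - |y - x|) := by
      exact (huxx.comp (by fun_prop : Continuous fun s : ℝ => ((y, s) : ℝ × ℝ))).intervalIntegrable _ _
    rw [intervalIntegral.integral_sub i1 i2, ftc_vert u hu]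
  rw [intervalIntegral.integral_congr e1]
  -- continuity facts for splitting the outer integral
  have hc1 : Continuous fun y : ℝ => pdt u (y, t - |y - x|) := by fun_prop
  have hc2 : Continuous fun y : ℝ => pdt u (y, 0) := by fun_prop
  have hc3 : Continuous fun y : ℝ => ∫ s in (0:ℝ)..(t - |y - x|), pdx (pdx u) (y, s) := by
    apply intervalIntegral.continuous_parametric_intervalIntegral_of_continuous
      (f := fun y s => pdx (pdx u) (y, s))
    · exact huxx.comp ((continuous_fst).prodMk continuous_snd)
    · fun_prop
  -- split the outer integral into three pieces
  rw [intervalIntegral.integral_sub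
        ((by fun_prop : Continuous fun y : ℝ => pdt u (y, t - |y - x|) - pdt u (y, 0)).intervalIntegrable _ _) (hc3.intervalIntegrable _ _),
      intervalIntegral.integral_sub (hc1.intervalIntegrable _ _) (hc2.intervalIntegrable _ _)]
  -- the uxx piece: swap back and use horizontal FTC
  have e4 : (∫ y in (x - t)..(x + t), ∫ s in (0:ℝ)..(t - |y - x|), pdx (pdx u) (y, s))
      = ∫ s in (0:ℝ)..t, (pdx u (x + t - s, s) - pdx u (x - t + s, s)) := by
    rw [← trapezoid_swap _ huxx x t ht]
    apply intervalIntegral.integral_congr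
    intro s _
    dsimp only
    rw [ftc_horiz u hu]
    have eβ : ((x + (t - s), s) : ℝ × ℝ) = (x + t - s, s) := by
      simp only [Prod.mk.injEq, and_true]; ring
    have eα : ((x - (t - s), s) : ℝ × ℝ) = (x - t + s, s) := by
      simp only [Prod.mk.injEq, and_true]; ring
    rw [eβ, eα]
  rw [e4]
  -- the boundary term: split at x and substitute along characteristics
  have e5 : (∫ y in (x - t)..(x + t), pdt u (y, t - |y - x|))
      = (∫ s in (0:ℝ)..t, pdt u (x + t - s, s)) + ∫ s in (0:ℝ)..t, pdt u (x - t + s, s) := by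
    have hsplit : (∫ y in (x - t)..(x + t), pdt u (y, t - |y - x|))
        = (∫ y in (x - t)..x, pdt u (y, t - |y - x|))
          + ∫ y in x..(x + t), pdt u (y, t - |y - x|) := by
      rw [intervalIntegral.integral_add_adjacent_intervals
        (hc1.intervalIntegrable _ _) (hc1.intervalIntegrable _ _)]
    rw [hsplit]
    have eR' : (∫ y in x..(x + t), pdt u (y, t - |y - x|))
        = ∫ s in (0:ℝ)..t, pdt u (x + t - s, s) := by
      have h1 : (∫ y in x..(x + t), pdt u (y, t - |y - x|))
          = ∫ y in x..(x + t), pdt u (y, t - (y - x)) := by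
        apply intervalIntegral.integral_congr
        intro y hy
        rw [Set.uIcc_of_le (by linarith : x ≤ x + t), Set.mem_Icc] at hy
        dsimp only
        rw [abs_of_nonneg (by linarith : (0:ℝ) ≤ y - x)]
      rw [h1]
      have h2 := intervalIntegral.integral_comp_sub_left (a := (0:ℝ)) (b := t)
        (fun y => pdt u (y, t - (y - x))) (x + t)
      have h3 : (∫ s in (0:ℝ)..t, pdt u (x + t - s, t - (x + t - s - x)))
          = ∫ s in (0:ℝ)..t, pdt u (x + t - s, s) := by
        apply intervalIntegral.integral_congr
        intro s _
        dsimp only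
        rw [show t - (x + t - s - x) = s by ring]
      rw [show x + t - t = x by ring, show x + t - 0 = x + t by ring] at h2
      rw [← h2]
      exact h3
    have eL' : (∫ y in (x - t)..x, pdt u (y, t - |y - x|))
        = ∫ s in (0:ℝ)..t, pdt u (x - t + s, s) := by
      have h1 : (∫ y in (x - t)..x, pdt u (y, t - |y - x|))
          = ∫ y in (x - t)..x, pdt u (y, t - (x - y)) := by
        apply intervalIntegral.integral_congr
        intro y hy
        rw [Set.uIcc_of_le (by linarith : x - t ≤ x), Set.mem_Icc] at hy
        dsimp only
        rw [abs_of_nonpos (by linarith : y - x ≤ 0)]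
        congr 2
        ring
      rw [h1]
      have h2 := intervalIntegral.integral_comp_add_left (a := (0:ℝ)) (b := t)
        (fun y => pdt u (y, t - (x - y))) (x - t)
      have h3 : (∫ s in (0:ℝ)..t, pdt u (x - t + s, t - (x - (x - t + s))))
          = ∫ s in (0:ℝ)..t, pdt u (x - t + s, s) := by
        apply intervalIntegral.integral_congr
        intro s _
        dsimp only
        rw [show t - (x - (x - t + s)) = s by ring]
      rw [show x - t + 0 = x - t by ring, show x - t + t = x by ring] at h2
      rw [← h2]
      exact h3
    rw [eR', eL']
    ring
  rw [e5]
  -- characteristic identities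
  have cL := ftc_charL u hu x t
  have cR := ftc_charR u hu x t
  have iL1 : IntervalIntegrable (fun s => pdt u (x + t - s, s)) volume 0 t :=
    (hut.comp (by fun_prop : Continuous fun s : ℝ => ((x + t - s, s) : ℝ × ℝ))).intervalIntegrable _ _
  have iL2 : IntervalIntegrable (fun s => pdx u (x + t - s, s)) volume 0 t :=
    (hux.comp (by fun_prop : Continuous fun s : ℝ => ((x + t - s, s) : ℝ × ℝ))).intervalIntegrable _ _
  have iR1 : IntervalIntegrable (fun s => pdt u (x - t + s, s)) volume 0 t :=
    (hut.comp (by fun_prop : Continuous fun s : ℝ => ((x - t + s, s) : ℝ × ℝ))).intervalIntegrable _ _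
  have iR2 : IntervalIntegrable (fun s => pdx u (x - t + s, s)) volume 0 t :=
    (hux.comp (by fun_prop : Continuous fun s : ℝ => ((x - t + s, s) : ℝ × ℝ))).intervalIntegrable _ _
  rw [intervalIntegral.integral_sub iL1 iL2] at cL
  rw [intervalIntegral.integral_add iR1 iR2] at cR
  rw [intervalIntegral.integral_sub iL2 iR2]
  linarith [cL, cR]

set_option maxHeartbeats 1000000 in
/-- The exponential (Gronwall) a priori bound for classical solutions of the
semilinear wave equation with globally Lipschitz nonlinearity; this is the key
step in proving moderateness of Colombeau solutions. -/
theorem semilinear_gronwall_bound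
    (f : ℝ → ℝ) (hf : ContDiff ℝ (⊤ : ℕ∞) f) (hf0 : f 0 = 0)
    (L : ℝ) (hfL : ∀ y : ℝ, |deriv f y| ≤ L)
    (h : ℝ × ℝ → ℝ) (hh : Continuous h)
    (u : ℝ × ℝ → ℝ) (hu : ContDiff ℝ 2 u)
    (hpde : ∀ p : ℝ × ℝ, waveOp u p = f (u p) + h p)
    (a b : ℝ → ℝ)
    (hadef : ∀ x : ℝ, a x = u (x, 0))
    (hbdef : ∀ x : ℝ, b x = deriv (fun s => u (x, s)) 0)
    (κ t T : ℝ) (hκ : 0 < κ) (ht0 : 0 ≤ t) (htT : t ≤ T) (hTκ : T ≤ κ) :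
    (⨆ p : KT κ t, |u p.1|) ≤
      ((⨆ x : Set.Icc (-κ) κ, |a (x : ℝ)|)
        + T * (⨆ x : Set.Icc (-κ) κ, |b (x : ℝ)|)
        + T ^ 2 * (⨆ p : KT κ T, |h p.1|)) * Real.exp (L * T * t) := by
  have hT0 : 0 ≤ T := le_trans ht0 htT
  have hL0 : 0 ≤ L := le_trans (abs_nonneg _) (hfL 0)
  set A := ⨆ x : Set.Icc (-κ) κ, |a (x : ℝ)| with hA_def
  set B := ⨆ x : Set.Icc (-κ) κ, |b (x : ℝ)| with hB_def
  set HS := ⨆ p : KT κ T, |h p.1| with hHS_def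
  set C := A + T * B + T ^ 2 * HS with hC_def
  -- nonemptiness
  have h00T : ((0:ℝ), (0:ℝ)) ∈ KT κ T := by
    refine ⟨le_rfl, hT0, ?_⟩; simp; linarith
  have h00t : ((0:ℝ), (0:ℝ)) ∈ KT κ t := by
    refine ⟨le_rfl, ht0, ?_⟩; simp; linarith
  haveI : Nonempty (KT κ T) := ⟨⟨_, h00T⟩⟩
  haveI : Nonempty (KT κ t) := ⟨⟨_, h00t⟩⟩
  haveI : Nonempty (Set.Icc (-κ) κ) := ⟨⟨0, by constructor <;> linarith⟩⟩
  -- continuity of data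
  have hucont : Continuous u := hu.continuous
  have ha_eq : a = fun x => u (x, 0) := funext hadef
  have hb_eq : b = fun x => pdt u (x, 0) := by
    funext x
    rw [hbdef x]
    exact (hasDerivAt_slice_t u (hu.differentiable (by norm_num)) x 0).deriv
  have ha_cont : Continuous a := by
    rw [ha_eq]; exact hucont.comp (by fun_prop)
  have hb_cont : Continuous b := by
    rw [hb_eq]; exact (cont_ut u hu).comp (by fun_prop)
  -- compactness of KT κ T
  have hKTclosed : IsClosed (KT κ T) := by
    have : KT κ T = {p : ℝ × ℝ | 0 ≤ p.2} ∩ {p | p.2 ≤ T} ∩ {p | |p.1| ≤ κ - p.2} := by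
      ext p; simp only [KT, Set.mem_setOf_eq, Set.mem_inter_iff]; tauto
    rw [this]
    exact ((isClosed_le continuous_const continuous_snd).inter
      (isClosed_le continuous_snd continuous_const)).inter
      (isClosed_le continuous_fst.abs (continuous_const.sub continuous_snd))
  have hKTsub : KT κ T ⊆ Set.Icc ((-κ, 0) : ℝ × ℝ) ((κ, T) : ℝ × ℝ) := by
    rintro p ⟨h1, h2, h3⟩
    rcases abs_le.1 h3 with ⟨h4, h5⟩
    exact ⟨⟨by dsimp; linarith, by dsimp; linarith⟩, ⟨by dsimp; linarith, by dsimp; linarith⟩⟩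
  have hKTcpt : IsCompact (KT κ T) := IsCompact.of_isClosed_subset isCompact_Icc hKTclosed hKTsub
  -- global bound on |u| over KT κ T
  obtain ⟨Bu0, hBu0⟩ := hKTcpt.exists_bound_of_continuousOn hucont.continuousOn
  set Bu := max Bu0 0 with hBu_def
  have hBu : ∀ p ∈ KT κ T, |u p| ≤ Bu := by
    intro p hp
    calc |u p| = ‖u p‖ := rfl
      _ ≤ Bu0 := hBu0 p hp
      _ ≤ Bu := le_max_left _ _
  have hBu_0 : (0:ℝ) ≤ Bu := le_max_right _ _
  -- sup bounds
  have hA0 : 0 ≤ A := Real.iSup_nonneg fun _ => abs_nonneg _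
  have hB0 : 0 ≤ B := Real.iSup_nonneg fun _ => abs_nonneg _
  have hH0 : 0 ≤ HS := Real.iSup_nonneg fun _ => abs_nonneg _
  have hC0 : 0 ≤ C := by rw [hC_def]; positivity
  have hAbd : ∀ z : ℝ, |z| ≤ κ → |u (z, 0)| ≤ A := by
    intro z hz
    haveI : CompactSpace (Set.Icc (-κ) κ) := isCompact_iff_compactSpace.mp isCompact_Icc
    have hbdd : BddAbove (Set.range fun x : Set.Icc (-κ) κ => |a (x : ℝ)|) :=
      (isCompact_range (ha_cont.abs.comp continuous_subtype_val)).bddAbove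
    have := le_ciSup hbdd (⟨z, Set.mem_Icc.2 ⟨by rcases abs_le.1 hz with ⟨h1, _⟩; linarith,
      (abs_le.1 hz).2⟩⟩ : Set.Icc (-κ) κ)
    rw [← hadef z]
    exact this
  have hBbd : ∀ z : ℝ, |z| ≤ κ → |pdt u (z, 0)| ≤ B := by
    intro z hz
    haveI : CompactSpace (Set.Icc (-κ) κ) := isCompact_iff_compactSpace.mp isCompact_Icc
    have hbdd : BddAbove (Set.range fun x : Set.Icc (-κ) κ => |b (x : ℝ)|) :=
      (isCompact_range (hb_cont.abs.comp continuous_subtype_val)).bddAbove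
    have := le_ciSup hbdd (⟨z, Set.mem_Icc.2 ⟨by rcases abs_le.1 hz with ⟨h1, _⟩; linarith,
      (abs_le.1 hz).2⟩⟩ : Set.Icc (-κ) κ)
    have hbz : b z = pdt u (z, 0) := by rw [hb_eq]
    exact hbz ▸ this
  have hHbd : ∀ p ∈ KT κ T, |h p| ≤ HS := by
    intro p hp
    haveI : CompactSpace (KT κ T) := isCompact_iff_compactSpace.mp hKTcpt
    have hbdd : BddAbove (Set.range fun q : KT κ T => |h q.1|) :=
      (isCompact_range (hh.abs.comp continuous_subtype_val)).bddAbove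
    exact le_ciSup hbdd (⟨p, hp⟩ : KT κ T)
  -- Lipschitz bound |f z| ≤ L |z|
  have hLip : ∀ z : ℝ, |f z| ≤ L * |z| := by
    intro z
    have hd : ∀ w ∈ (Set.univ : Set ℝ), DifferentiableAt ℝ f w :=
      fun w _ => (hf.differentiable (by simp)).differentiableAt
    have := Convex.norm_image_sub_le_of_norm_deriv_le hd
      (fun w _ => by simpa using hfL w) convex_univ (Set.mem_univ 0) (Set.mem_univ z)
    simpa [hf0] using this
  -- the forcing term
  have hFcont : Continuous fun p : ℝ × ℝ => f (u p) + h p :=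
    (hf.continuous.comp hucont).add hh
  -- main induction
  have main : ∀ n : ℕ, ∀ p : ℝ × ℝ, p ∈ KT κ T →
      |u p| ≤ C * Real.exp (L * T * p.2) + (L * T * p.2) ^ n / n.factorial * Bu := by
    intro n
    induction n with
    | zero =>
      intro p hp
      have h1 : (0:ℝ) ≤ C * Real.exp (L * T * p.2) := by positivity
      have h2 := hBu p hp
      simp only [pow_zero, Nat.factorial_zero, Nat.cast_one, div_one, one_mul]
      linarith
    | succ n ih =>
      rintro ⟨y, τ⟩ hp
      obtain ⟨hτ0, hτT, hyκ⟩ := hp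
      dsimp only at hτ0 hτT hyκ
      -- the d'Alembert representation
      have hrep := dAlembert u hu y τ hτ0
      simp only [hpde] at hrep
      -- bound each of the four terms
      have hbd1 : |u (y + τ, 0)| ≤ A := by
        apply hAbd
        calc |y + τ| ≤ |y| + |τ| := abs_add_le _ _
          _ ≤ (κ - τ) + τ := by rw [abs_of_nonneg hτ0]; linarith
          _ = κ := by ring
      have hbd2 : |u (y - τ, 0)| ≤ A := by
        apply hAbd
        calc |y - τ| ≤ |y| + |τ| := abs_sub _ _
          _ ≤ (κ - τ) + τ := by rw [abs_of_nonneg hτ0]; linarith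
          _ = κ := by ring
      have hbd3 : |∫ z in (y - τ)..(y + τ), pdt u (z, 0)| ≤ B * (2 * τ) := by
        have := intervalIntegral.norm_integral_le_of_norm_le_const
          (C := B) (f := fun z => pdt u (z, 0)) (a := y - τ) (b := y + τ) ?_
        · calc |∫ z in (y - τ)..(y + τ), pdt u (z, 0)| ≤ B * |(y + τ) - (y - τ)| := this
            _ = B * (2 * τ) := by rw [show (y + τ) - (y - τ) = 2 * τ by ring,
                abs_of_nonneg (by linarith : (0:ℝ) ≤ 2 * τ)]
        · intro z hz
          rw [Set.uIoc_of_le (by linarith : y - τ ≤ y + τ)] at hz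
          apply hBbd
          calc |z| = |y + (z - y)| := by ring_nf
            _ ≤ |y| + |z - y| := abs_add_le _ _
            _ ≤ (κ - τ) + τ := by
                have : |z - y| ≤ τ := abs_le.2 ⟨by rcases hz with ⟨h1', h2'⟩; linarith,
                  by rcases hz with ⟨h1', h2'⟩; linarith⟩
                linarith
            _ = κ := by ring
      -- the bound function for the source integral
      set φ : ℝ → ℝ := fun s => C * Real.exp (L * T * s) + (L * T * s) ^ n / n.factorial * Bu
        with hφ_def
      have hφ0 : ∀ s, 0 ≤ s → 0 ≤ φ s := by
        intro s hs
        have : (0:ℝ) ≤ (L * T * s) ^ n := by positivity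
        have : (0:ℝ) ≤ (L * T * s) ^ n / n.factorial * Bu := by positivity
        have : (0:ℝ) ≤ C * Real.exp (L * T * s) := by positivity
        rw [hφ_def]; dsimp only; positivity
      -- inner integral bound for s ∈ [0, τ]
      have hinner : ∀ s ∈ Set.Icc (0:ℝ) τ,
          |∫ z in (y - (τ - s))..(y + (τ - s)), (f (u (z, s)) + h (z, s))|
            ≤ (L * φ s + HS) * (2 * (τ - s)) := by
        intro s hs
        obtain ⟨hs0, hsτ⟩ := hs
        have := intervalIntegral.norm_integral_le_of_norm_le_const
          (C := L * φ s + HS) (f := fun z => f (u (z, s)) + h (z, s))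
          (a := y - (τ - s)) (b := y + (τ - s)) ?_
        · calc |∫ z in (y - (τ - s))..(y + (τ - s)), (f (u (z, s)) + h (z, s))|
              ≤ (L * φ s + HS) * |(y + (τ - s)) - (y - (τ - s))| := this
            _ = (L * φ s + HS) * (2 * (τ - s)) := by
                rw [show (y + (τ - s)) - (y - (τ - s)) = 2 * (τ - s) by ring,
                  abs_of_nonneg (by linarith : (0:ℝ) ≤ 2 * (τ - s))]
        · intro z hz
          rw [Set.uIoc_of_le (by linarith : y - (τ - s) ≤ y + (τ - s))] at hz
          have hzs : (z, s) ∈ KT κ T := by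
            refine ⟨hs0, by linarith, ?_⟩
            dsimp only
            calc |z| = |y + (z - y)| := by ring_nf
              _ ≤ |y| + |z - y| := abs_add_le _ _
              _ ≤ (κ - τ) + (τ - s) := by
                  have : |z - y| ≤ τ - s := abs_le.2 ⟨by rcases hz with ⟨h1', h2'⟩; linarith,
                    by rcases hz with ⟨h1', h2'⟩; linarith⟩
                  linarith
              _ = κ - s := by ring
          have hu_bd : |u (z, s)| ≤ φ s := ih (z, s) hzs
          calc ‖f (u (z, s)) + h (z, s)‖ = |f (u (z, s)) + h (z, s)| := rfl
            _ ≤ |f (u (z, s))| + |h (z, s)| := abs_add_le _ _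
            _ ≤ L * |u (z, s)| + HS := add_le_add (hLip _) (hHbd (z, s) hzs)
            _ ≤ L * φ s + HS := by
                have := mul_le_mul_of_nonneg_left hu_bd hL0
                linarith
      -- continuity of the inner integral as a function of s
      have hinner_cont : Continuous fun s =>
          ∫ z in (y - (τ - s))..(y + (τ - s)), (f (u (z, s)) + h (z, s)) := by
        have hFc : Continuous (Function.uncurry fun s z => f (u (z, s)) + h (z, s)) := by
          apply hFcont.comp
          fun_prop
        have h1 : Continuous fun s => ∫ z in (y - τ)..(y + (τ - s)), (f (u (z, s)) + h (z, s)) :=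
          intervalIntegral.continuous_parametric_intervalIntegral_of_continuous
            (f := fun s z => f (u (z, s)) + h (z, s)) hFc (by fun_prop)
        have h2 : Continuous fun s => ∫ z in (y - τ)..(y - (τ - s)), (f (u (z, s)) + h (z, s)) :=
          intervalIntegral.continuous_parametric_intervalIntegral_of_continuous
            (f := fun s z => f (u (z, s)) + h (z, s)) hFc (by fun_prop)
        have heq : (fun s => ∫ z in (y - (τ - s))..(y + (τ - s)), (f (u (z, s)) + h (z, s)))
            = fun s => (∫ z in (y - τ)..(y + (τ - s)), (f (u (z, s)) + h (z, s)))
              - ∫ z in (y - τ)..(y - (τ - s)), (f (u (z, s)) + h (z, s)) := by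
          funext s
          rw [eq_sub_iff_add_eq, add_comm,
            intervalIntegral.integral_add_adjacent_intervals]
          · exact ((hFcont.comp (by fun_prop : Continuous fun z : ℝ => ((z, s) : ℝ × ℝ)))).intervalIntegrable _ _
          · exact ((hFcont.comp (by fun_prop : Continuous fun z : ℝ => ((z, s) : ℝ × ℝ)))).intervalIntegrable _ _
        rw [heq]
        exact h1.sub h2
      -- the dominating function and its antiderivative
      set g : ℝ → ℝ := fun s => 2 * T * (L * φ s + HS) with hg_def
      have hg_cont : Continuous g := by
        rw [hg_def, hφ_def]
        fun_prop
      set Ψ : ℝ → ℝ := fun s => 2 * C * Real.exp (L * T * s)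
        + 2 * Bu * (L * T * s) ^ (n + 1) / (n + 1).factorial + 2 * T * HS * s with hΨ_def
      have hfact : ((n + 1).factorial : ℝ) = (n + 1) * n.factorial := by
        exact_mod_cast Nat.factorial_succ n
      have hΨderiv : ∀ s : ℝ, HasDerivAt Ψ (2 * T * L * C * Real.exp (L * T * s)
          + 2 * T * L * Bu * (L * T * s) ^ n / n.factorial + 2 * T * HS) s := by
        intro s
        have hexp : HasDerivAt (fun s : ℝ => Real.exp (L * T * s)) (Real.exp (L * T * s) * (L * T)) s := by
          simpa using (((hasDerivAt_id s).const_mul (L * T)).exp)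
        have hpow : HasDerivAt (fun s : ℝ => (L * T * s) ^ (n + 1))
            ((n + 1 : ℕ) * (L * T * s) ^ n * (L * T)) s := by
          have := (((hasDerivAt_id s).const_mul (L * T)).pow (n + 1))
          simp at this
          exact_mod_cast this
        have h1 := hexp.const_mul (2 * C)
        have h2 := (hpow.const_mul (2 * Bu)).div_const ((n + 1).factorial : ℝ)
        have h3 := (hasDerivAt_id s).const_mul (2 * T * HS)
        have := (h1.add h2).add h3
        refine this.congr_deriv ?_
        rw [hfact]
        have hnfac : (n.factorial : ℝ) ≠ 0 := by positivity
        field_simp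
        push_cast
        ring
      have hgΨ : ∀ s : ℝ, HasDerivAt Ψ (g s) s := by
        intro s
        convert hΨderiv s using 1
        rw [hg_def, hφ_def]
        dsimp only
        field_simp
      have hΨint : (∫ s in (0:ℝ)..τ, g s) = Ψ τ - Ψ 0 :=
        intervalIntegral.integral_eq_sub_of_hasDerivAt (fun s _ => hgΨ s)
          (hg_cont.intervalIntegrable _ _)
      have hΨ0 : Ψ 0 = 2 * C := by
        rw [hΨ_def]
        simp [zero_pow (Nat.succ_ne_zero n)]
      -- bound the double integral
      have hbd4 : |∫ s in (0:ℝ)..τ, ∫ z in (y - (τ - s))..(y + (τ - s)),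
          (f (u (z, s)) + h (z, s))| ≤ Ψ τ - 2 * C := by
        have step1 := intervalIntegral.abs_integral_le_integral_abs (μ := volume)
          (f := fun s => ∫ z in (y - (τ - s))..(y + (τ - s)), (f (u (z, s)) + h (z, s))) hτ0
        have step2 : (∫ s in (0:ℝ)..τ,
            |∫ z in (y - (τ - s))..(y + (τ - s)), (f (u (z, s)) + h (z, s))|)
            ≤ ∫ s in (0:ℝ)..τ, g s := by
          apply intervalIntegral.integral_mono_on hτ0
            (hinner_cont.abs.intervalIntegrable _ _) (hg_cont.intervalIntegrable _ _)
          intro s hs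
          have h1 := hinner s hs
          have h2 : (L * φ s + HS) * (2 * (τ - s)) ≤ g s := by
            rw [hg_def]
            dsimp only
            have hnn : 0 ≤ L * φ s + HS := by
              have := hφ0 s hs.1
              positivity
            have : 2 * (τ - s) ≤ 2 * T := by rcases hs with ⟨hs1, hs2⟩; linarith
            calc (L * φ s + HS) * (2 * (τ - s)) ≤ (L * φ s + HS) * (2 * T) :=
                mul_le_mul_of_nonneg_left this hnn
              _ = 2 * T * (L * φ s + HS) := by ring
          exact le_trans h1 h2
        rw [hΨint] at step2
        calc |∫ s in (0:ℝ)..τ, ∫ z in (y - (τ - s))..(y + (τ - s)), (f (u (z, s)) + h (z, s))|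
            ≤ ∫ s in (0:ℝ)..τ,
              |∫ z in (y - (τ - s))..(y + (τ - s)), (f (u (z, s)) + h (z, s))| := step1
          _ ≤ Ψ τ - Ψ 0 := step2
          _ = Ψ τ - 2 * C := by rw [hΨ0]
      -- assemble
      have htri : |2 * u (y, τ)| ≤ |u (y + τ, 0)| + |u (y - τ, 0)|
          + |∫ z in (y - τ)..(y + τ), pdt u (z, 0)|
          + |∫ s in (0:ℝ)..τ, ∫ z in (y - (τ - s))..(y + (τ - s)),
              (f (u (z, s)) + h (z, s))| := by
        rw [hrep]
        calc |u (y + τ, 0) + u (y - τ, 0) + (∫ z in (y - τ)..(y + τ), pdt u (z, 0))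
              + ∫ s in (0:ℝ)..τ, ∫ z in (y - (τ - s))..(y + (τ - s)),
                (f (u (z, s)) + h (z, s))|
            ≤ |u (y + τ, 0) + u (y - τ, 0) + (∫ z in (y - τ)..(y + τ), pdt u (z, 0))|
              + |∫ s in (0:ℝ)..τ, ∫ z in (y - (τ - s))..(y + (τ - s)),
                (f (u (z, s)) + h (z, s))| := abs_add_le _ _
          _ ≤ |u (y + τ, 0) + u (y - τ, 0)| + |∫ z in (y - τ)..(y + τ), pdt u (z, 0)|
              + |∫ s in (0:ℝ)..τ, ∫ z in (y - (τ - s))..(y + (τ - s)),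
                (f (u (z, s)) + h (z, s))| := by
              have := abs_add_le (u (y + τ, 0) + u (y - τ, 0))
                (∫ z in (y - τ)..(y + τ), pdt u (z, 0))
              linarith
          _ ≤ _ := by
              have := abs_add_le (u (y + τ, 0)) (u (y - τ, 0))
              linarith
      have habs2 : |2 * u (y, τ)| = 2 * |u (y, τ)| := by
        rw [abs_mul]; norm_num
      rw [habs2] at htri
      -- final arithmetic
      have hτB : τ * B ≤ T * B := mul_le_mul_of_nonneg_right hτT hB0
      have hΨτ : Ψ τ = 2 * C * Real.exp (L * T * τ)
          + 2 * Bu * (L * T * τ) ^ (n + 1) / (n + 1).factorial + 2 * T * HS * τ := by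
        rw [hΨ_def]
      have hTHS : 2 * T * HS * τ ≤ 2 * (T ^ 2) * HS := by
        have : T * τ ≤ T * T := mul_le_mul_of_nonneg_left hτT hT0
        nlinarith
      have hCdef : A + T * B + T ^ 2 * HS = C := by rw [hC_def]
      dsimp only
      rw [hΨτ] at hbd4
      have hkey : 2 * |u (y, τ)| ≤ 2 * (C * Real.exp (L * T * τ)
          + (L * T * τ) ^ (n + 1) / (n + 1).factorial * Bu) := by
        have e1 : 2 * Bu * (L * T * τ) ^ (n + 1) / ((n + 1).factorial : ℝ)
            = 2 * ((L * T * τ) ^ (n + 1) / ((n + 1).factorial : ℝ) * Bu) := by ring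
        linarith [htri, hbd1, hbd2, hbd3, hbd4, hτB, hTHS, hCdef, e1]
      linarith [hkey]
  -- pass to the limit n → ∞
  have final : ∀ p : ℝ × ℝ, p ∈ KT κ t → |u p| ≤ C * Real.exp (L * T * t) := by
    rintro p ⟨h1, h2, h3⟩
    have hpT : p ∈ KT κ T := ⟨h1, le_trans h2 htT, h3⟩
    have hlim : Tendsto (fun n : ℕ => C * Real.exp (L * T * p.2)
        + (L * T * p.2) ^ n / n.factorial * Bu) atTop
        (nhds (C * Real.exp (L * T * p.2) + 0 * Bu)) :=
      tendsto_const_nhds.add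
        ((FloorSemiring.tendsto_pow_div_factorial_atTop (L * T * p.2)).mul_const Bu)
    have hle : |u p| ≤ C * Real.exp (L * T * p.2) + 0 * Bu :=
      ge_of_tendsto' hlim fun n => main n p hpT
    have hmono : Real.exp (L * T * p.2) ≤ Real.exp (L * T * t) := by
      apply Real.exp_le_exp.2
      apply mul_le_mul_of_nonneg_left h2
      positivity
    calc |u p| ≤ C * Real.exp (L * T * p.2) + 0 * Bu := hle
      _ = C * Real.exp (L * T * p.2) := by ring
      _ ≤ C * Real.exp (L * T * t) := mul_le_mul_of_nonneg_left hmono hC0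
  exact ciSup_le fun p => final p.1 p.2
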